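/- (Alzer's gamma-distribution bound, the paper's Lemma 2.) For every integer M ≥ 1 and every real τ > 0, setting α = (M!)^{−1/M}, one has 1 − e^{−τ}·∑_{k=0}^{M−1} τ^k/k! ≥ (1 − e^{−ατ})^M, i.e., the CDF at τ of a Gamma(M,1) random variable is bounded below by (1 − e^{−ατ})^M; moreover the inequality is strict when M ≥ 2. -/

import Mathlib

open Real Finset MeasureTheory

namespace Alzer

noncomputable def P (M : ℕ) (x : ℝ) : ℝ := ∑ k ∈ Finset.range M, x ^ k / (k.factorial : ℝ)

noncomputable def Fc (M : ℕ) (x : ℝ) : ℝ := if 0 ≤ x then 1 - Real.exp (-x) * P M x else 0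

noncomputable def Vc (M : ℕ) (x : ℝ) : ℝ := if 0 ≤ x then x ^ M / (M.factorial : ℝ) else 0

lemma continuous_P (M : ℕ) : Continuous (P M) :=
  continuous_finset_sum _ fun k _ => (continuous_pow k).div_const _

lemma P_zero (M : ℕ) : P (M+1) 0 = 1 := by
  rw [P, Finset.sum_eq_single_of_mem 0 (Finset.mem_range.2 (Nat.succ_pos M))]
  · simp
  · intro b _ hb
    simp [zero_pow hb]

lemma hasDerivAt_P (M : ℕ) (u : ℝ) : HasDerivAt (P (M+1)) (P M u) u := by
  have h : ∀ k ∈ Finset.range (M+1), HasDerivAt (fun x : ℝ => x ^ k / (k.factorial : ℝ))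
      ((k : ℝ) * u ^ (k-1) / (k.factorial : ℝ)) u :=
    fun k _ => (hasDerivAt_pow k u).div_const _
  have h2 := HasDerivAt.sum h
  have h3 : ∑ k ∈ Finset.range (M+1), (k : ℝ) * u ^ (k-1) / (k.factorial : ℝ) = P M u := by
    rw [Finset.sum_range_succ']
    have : ∀ i ∈ Finset.range M, ((i+1 : ℕ) : ℝ) * u ^ ((i+1)-1) / ((i+1).factorial : ℝ)
        = u ^ i / (i.factorial : ℝ) := by
      intro i _
      rw [Nat.factorial_succ, Nat.add_sub_cancel]
      push_cast
      rw [mul_div_mul_left _ _ (by positivity)]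
    rw [Finset.sum_congr rfl this]
    simp [P]
  rw [h3] at h2
  have e : (∑ i ∈ Finset.range (M+1), fun x : ℝ => x ^ i / (i.factorial : ℝ)) = P (M+1) := by
    funext x
    simp [P, Finset.sum_apply]
  rw [e] at h2
  exact h2

lemma oned_exp (M : ℕ) (τ : ℝ) (hτ : 0 ≤ τ) :
    (∫ s in (0:ℝ)..τ, Real.exp (-s) * Fc M (τ - s)) = Fc (M+1) τ := by
  have hcong : ∀ s ∈ Set.uIcc (0:ℝ) τ,
      Real.exp (-s) * Fc M (τ - s) =
        (fun u => Real.exp (-τ) * (Real.exp u - P M u)) (τ - s) := by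
    intro s hs
    rw [Set.uIcc_of_le hτ] at hs
    have h1 : (0:ℝ) ≤ τ - s := by linarith [hs.2]
    rw [Fc, if_pos h1]
    have : Real.exp (-s) * Real.exp (-(τ - s)) = Real.exp (-τ) := by
      rw [← Real.exp_add]; ring_nf
    have h2 : Real.exp (-τ) * Real.exp (τ - s) = Real.exp (-s) := by
      rw [← Real.exp_add]; ring_nf
    simp only [mul_sub, mul_one, ← mul_assoc, this, h2]
  rw [intervalIntegral.integral_congr hcong,
    intervalIntegral.integral_comp_sub_left (fun u => Real.exp (-τ) * (Real.exp u - P M u)) τ,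
    sub_self, sub_zero]
  have hderiv : ∀ u ∈ Set.uIcc (0:ℝ) τ,
      HasDerivAt (fun u => Real.exp (-τ) * (Real.exp u - P (M+1) u))
        (Real.exp (-τ) * (Real.exp u - P M u)) u :=
    fun u _ => ((Real.hasDerivAt_exp u).sub (hasDerivAt_P M u)).const_mul _
  have hint : IntervalIntegrable (fun u => Real.exp (-τ) * (Real.exp u - P M u))
      volume 0 τ :=
    (continuous_const.mul (Real.continuous_exp.sub (continuous_P M))).intervalIntegrable _ _
  rw [intervalIntegral.integral_eq_sub_of_hasDerivAt hderiv hint]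
  rw [Fc, if_pos hτ, P_zero, Real.exp_zero]
  have h4 : Real.exp (-τ) * Real.exp τ = 1 := by rw [← Real.exp_add]; simp
  rw [sub_self, mul_zero, sub_zero, mul_sub, h4]

lemma oned_vol (M : ℕ) (τ : ℝ) (hτ : 0 ≤ τ) :
    (∫ s in (0:ℝ)..τ, Vc M (τ - s)) = Vc (M+1) τ := by
  have hcong : ∀ s ∈ Set.uIcc (0:ℝ) τ,
      Vc M (τ - s) = (fun u => u ^ M / (M.factorial : ℝ)) (τ - s) := by
    intro s hs
    rw [Set.uIcc_of_le hτ] at hs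
    have h1 : (0:ℝ) ≤ τ - s := by linarith [hs.2]
    rw [Vc, if_pos h1]
  rw [intervalIntegral.integral_congr hcong,
    intervalIntegral.integral_comp_sub_left (fun u => u ^ M / (M.factorial : ℝ)) τ,
    sub_self, sub_zero, intervalIntegral.integral_div, integral_pow]
  rw [Vc, if_pos hτ, Nat.factorial_succ]
  have h1 : ((M:ℝ) + 1) ≠ 0 := by positivity
  have h2 : ((M.factorial : ℝ)) ≠ 0 := by positivity
  push_cast
  field_simp
  simp

/-- the simplex -/
def S (M : ℕ) (τ : ℝ) : Set (Fin M → ℝ) := {t | (∀ i, 0 ≤ t i) ∧ ∑ i, t i ≤ τ}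

lemma isClosed_S (M : ℕ) (τ : ℝ) : IsClosed (S M τ) := by
  have : S M τ = (⋂ i, {t : Fin M → ℝ | 0 ≤ t i}) ∩ {t : Fin M → ℝ | ∑ i, t i ≤ τ} := by
    ext t; simp [S, Set.mem_iInter]
  rw [this]
  exact ((isClosed_iInter fun i => isClosed_le continuous_const (continuous_apply i))).inter
    (isClosed_le (by fun_prop) continuous_const)

lemma measurableSet_S (M : ℕ) (τ : ℝ) : MeasurableSet (S M τ) := (isClosed_S M τ).measurableSet

lemma S_subset_box (M : ℕ) (τ : ℝ) :
    S M τ ⊆ Set.pi Set.univ (fun _ : Fin M => Set.Icc 0 (max τ 0)) := by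
  intro t ht
  rcases ht with ⟨h0, hs⟩
  intro i _
  refine ⟨h0 i, ?_⟩
  calc t i ≤ ∑ j, t j := Finset.single_le_sum (fun j _ => h0 j) (Finset.mem_univ i)
  _ ≤ τ := hs
  _ ≤ max τ 0 := le_max_left _ _

lemma isCompact_S (M : ℕ) (τ : ℝ) : IsCompact (S M τ) :=
  IsCompact.of_isClosed_subset (isCompact_univ_pi fun _ => isCompact_Icc)
    (isClosed_S M τ) (S_subset_box M τ)

lemma S_empty {M : ℕ} {τ : ℝ} (hτ : τ < 0) : S M τ = ∅ := by
  ext t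
  simp only [S, Set.mem_setOf_eq, Set.mem_empty_iff_false, iff_false, not_and]
  intro h0 hs
  exact absurd (le_trans (Finset.sum_nonneg fun i _ => h0 i) hs) (not_le.2 hτ)

lemma integrableOn_S {M : ℕ} {τ : ℝ} {g : (Fin M → ℝ) → ℝ} (hg : Continuous g) :
    IntegrableOn g (S M τ) :=
  hg.continuousOn.integrableOn_compact (isCompact_S M τ)

lemma step (g : ℝ → ℝ) (hg : Continuous g) (M : ℕ) (τ : ℝ) (hτ : 0 ≤ τ) :
    ∫ t in S (M+1) τ, g (∑ i, t i) =
      ∫ s in (0:ℝ)..τ, ∫ y in S M (τ - s), g (s + ∑ i, y i) := by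
  have hw : Continuous fun t : Fin (M+1) → ℝ => g (∑ i, t i) := hg.comp (by fun_prop)
  set w : (Fin (M+1) → ℝ) → ℝ := fun t => g (∑ i, t i) with hwdef
  set F := (S (M+1) τ).indicator w with hFdef
  have hmp := measurePreserving_piFinSuccAbove (fun _ : Fin (M+1) => (volume : Measure ℝ)) 0
  set e := MeasurableEquiv.piFinSuccAbove (fun _ : Fin (M+1) => ℝ) 0 with he
  have hsymm : ∀ (s : ℝ) (y : Fin M → ℝ), e.symm (s, y) = Fin.insertNth 0 s y := by
    intro s y; rfl
  have hsum : ∀ (s : ℝ) (y : Fin M → ℝ), ∑ i, (Fin.insertNth 0 s y) i = s + ∑ i, y i := by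
    intro s y
    rw [Fin.sum_univ_succAbove _ 0]
    simp [Fin.insertNth_apply_same, Fin.insertNth_apply_succAbove]
  have hmem : ∀ (s : ℝ) (y : Fin M → ℝ),
      ((Fin.insertNth 0 s y) ∈ S (M+1) τ) ↔ (0 ≤ s ∧ y ∈ S M (τ - s)) := by
    intro s y
    simp only [S, Set.mem_setOf_eq, Fin.forall_iff_succAbove (0 : Fin (M+1)),
      Fin.insertNth_apply_same, Fin.insertNth_apply_succAbove, hsum]
    constructor
    · rintro ⟨⟨h1, h2⟩, h3⟩; exact ⟨h1, ⟨h2, by linarith⟩⟩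
    · rintro ⟨h1, h2, h3⟩; exact ⟨⟨h1, h2⟩, by linarith⟩
  have key : ∀ (s : ℝ) (y : Fin M → ℝ), F (e.symm (s, y)) =
      Set.indicator (Set.Ici (0:ℝ)) (fun _ => (1:ℝ)) s *
        Set.indicator (S M (τ - s)) (fun y' => g (s + ∑ i, y' i)) y := by
    intro s y
    rw [hsymm]
    by_cases h0 : 0 ≤ s
    · by_cases hy : y ∈ S M (τ - s)
      · rw [hFdef, Set.indicator_of_mem ((hmem s y).2 ⟨h0, hy⟩),
          Set.indicator_of_mem (Set.mem_Ici.2 h0), Set.indicator_of_mem hy]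
        simp [hwdef, hsum]
      · rw [hFdef, Set.indicator_of_notMem (fun h => hy ((hmem s y).1 h).2),
          Set.indicator_of_notMem hy, mul_zero]
    · rw [hFdef, Set.indicator_of_notMem (fun h => h0 ((hmem s y).1 h).1),
        Set.indicator_of_notMem (fun h => h0 (Set.mem_Ici.1 h)), zero_mul]
  have hIntF : Integrable F (volume : Measure (Fin (M+1) → ℝ)) :=
    (integrable_indicator_iff (measurableSet_S _ _)).2 (integrableOn_S hw)
  have hIntF' : Integrable (fun z : ℝ × (Fin M → ℝ) => F (e.symm z))
      ((volume : Measure ℝ).prod (Measure.pi fun _ : Fin M => (volume : Measure ℝ))) := by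
    rw [← hmp.integrable_comp_emb e.measurableEmbedding] at *
    convert hIntF using 1
    · rfl
    · funext t; simp
    exact volume_pi.symm
  set I : ℝ → ℝ := fun s => ∫ y in S M (τ - s), g (s + ∑ i, y i) with hIdef
  have h1 : ∫ t in S (M+1) τ, w t = ∫ t, F t := (integral_indicator (measurableSet_S _ _)).symm
  have h2 : ∫ t, F t = ∫ z : ℝ × (Fin M → ℝ), F (e.symm z)
      ∂((volume : Measure ℝ).prod (Measure.pi fun _ : Fin M => (volume : Measure ℝ))) := by
    have h := hmp.integral_comp' (fun z => F (e.symm z))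
    simp only [MeasurableEquiv.symm_apply_apply] at h
    rw [volume_pi]
    exact h
  have h3 : ∫ z : ℝ × (Fin M → ℝ), F (e.symm z)
      ∂((volume : Measure ℝ).prod (Measure.pi fun _ : Fin M => (volume : Measure ℝ)))
      = ∫ s : ℝ, ∫ y : Fin M → ℝ, F (e.symm (s, y)) := integral_prod _ hIntF'
  have h4 : ∀ s : ℝ, (∫ y : Fin M → ℝ, F (e.symm (s, y)))
      = Set.indicator (Set.Icc (0:ℝ) τ) I s := by
    intro s
    have hin : (∫ y : Fin M → ℝ, F (e.symm (s, y)))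
        = Set.indicator (Set.Ici (0:ℝ)) (fun _ => (1:ℝ)) s * I s := by
      simp_rw [key s]
      rw [integral_const_mul, hIdef]
      congr 1
      exact integral_indicator (measurableSet_S M (τ - s))
    rw [hin]
    rcases lt_or_ge s 0 with hs | hs
    · have h5 : Set.indicator (Set.Icc (0:ℝ) τ) I s = 0 :=
        Set.indicator_of_notMem (fun hmem => hs.not_ge hmem.1) _
      have h6 : Set.indicator (Set.Ici (0:ℝ)) (fun _ => (1:ℝ)) s = 0 :=
        Set.indicator_of_notMem (fun hmem => hs.not_ge hmem) _
      rw [h5, h6, zero_mul]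
    · rcases le_or_gt s τ with hsτ | hsτ
      · have h5 : Set.indicator (Set.Icc (0:ℝ) τ) I s = I s :=
          Set.indicator_of_mem (Set.mem_Icc.2 ⟨hs, hsτ⟩) _
        rw [h5, Set.indicator_of_mem (Set.mem_Ici.2 hs), one_mul]
      · have h5 : Set.indicator (Set.Icc (0:ℝ) τ) I s = 0 :=
          Set.indicator_of_notMem (fun hmem => hsτ.not_ge hmem.2) _
        have h7 : I s = 0 := by
          rw [hIdef]
          simp only
          rw [S_empty (by linarith), Measure.restrict_empty, integral_zero_measure]
        rw [h5, Set.indicator_of_mem (Set.mem_Ici.2 hs), one_mul, h7]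
  calc ∫ t in S (M+1) τ, w t = ∫ s : ℝ, ∫ y : Fin M → ℝ, F (e.symm (s, y)) := by
        rw [h1, h2, h3]
    _ = ∫ s : ℝ, Set.indicator (Set.Icc (0:ℝ) τ) I s := by
        exact integral_congr_ae (Filter.Eventually.of_forall h4)
    _ = ∫ s in Set.Icc (0:ℝ) τ, I s := integral_indicator measurableSet_Icc
    _ = ∫ s in Set.Ioc (0:ℝ) τ, I s := integral_Icc_eq_integral_Ioc
    _ = ∫ s in (0:ℝ)..τ, I s := (intervalIntegral.integral_of_le hτ).symm

lemma simplex_integral : ∀ (M : ℕ) (τ : ℝ),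
    (∫ t in S M τ, Real.exp (-(∑ i, t i))) = Fc M τ := by
  intro M
  induction M with
  | zero =>
    intro τ
    rcases le_or_gt 0 τ with hτ | hτ
    · have hS : S 0 τ = Set.univ := by
        ext t; simp [S, hτ]
      rw [hS, Measure.restrict_univ]
      have h1 : ∀ t : Fin 0 → ℝ, Real.exp (-(∑ i, t i)) = 1 := by intro t; simp
      rw [integral_congr_ae (Filter.Eventually.of_forall h1), integral_const]
      simp [Fc, P, hτ, volume_pi, Measure.pi_univ, measureReal_def]
    · rw [S_empty hτ, Measure.restrict_empty, integral_zero_measure, Fc, if_neg hτ.not_ge]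
  | succ M ih =>
    intro τ
    rcases lt_or_ge τ 0 with hτ | hτ
    · rw [S_empty hτ, Measure.restrict_empty, integral_zero_measure, Fc, if_neg hτ.not_ge]
    · have hstep : (∫ t in S (M+1) τ, Real.exp (-(∑ i, t i)))
          = ∫ s in (0:ℝ)..τ, ∫ y in S M (τ - s), Real.exp (-(s + ∑ i, y i)) :=
        step (fun x => Real.exp (-x)) (by fun_prop) M τ hτ
      rw [hstep]
      have h1 : ∀ s : ℝ, (∫ y in S M (τ - s), Real.exp (-(s + ∑ i, y i)))
          = Real.exp (-s) * Fc M (τ - s) := by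
        intro s
        rw [← ih (τ - s), ← integral_const_mul]
        apply integral_congr_ae (Filter.Eventually.of_forall ?_)
        intro y
        rw [← Real.exp_add]
        ring_nf
      rw [intervalIntegral.integral_congr (fun s _ => h1 s)]
      exact oned_exp M τ hτ

lemma simplex_vol : ∀ (M : ℕ) (τ : ℝ), (∫ t in S M τ, (1:ℝ)) = Vc M τ := by
  intro M
  induction M with
  | zero =>
    intro τ
    rcases le_or_gt 0 τ with hτ | hτ
    · have hS : S 0 τ = Set.univ := by
        ext t; simp [S, hτ]
      rw [hS, Measure.restrict_univ, integral_const]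
      simp [Vc, hτ, volume_pi, Measure.pi_univ, measureReal_def]
    · rw [S_empty hτ, Measure.restrict_empty, integral_zero_measure, Vc, if_neg hτ.not_ge]
  | succ M ih =>
    intro τ
    rcases lt_or_ge τ 0 with hτ | hτ
    · rw [S_empty hτ, Measure.restrict_empty, integral_zero_measure, Vc, if_neg hτ.not_ge]
    · have hstep : (∫ t in S (M+1) τ, (1:ℝ))
          = ∫ s in (0:ℝ)..τ, ∫ y in S M (τ - s), (1:ℝ) :=
        step (fun _ => (1:ℝ)) continuous_const M τ hτ
      rw [hstep]
      have h1 : ∀ s : ℝ, (∫ y in S M (τ - s), (1:ℝ)) = Vc M (τ - s) := fun s => ih (τ - s)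
      rw [intervalIntegral.integral_congr (fun s _ => h1 s)]
      exact oned_vol M τ hτ

/-- the cube -/
def B (M : ℕ) (β : ℝ) : Set (Fin M → ℝ) := Set.pi Set.univ (fun _ => Set.Icc 0 β)

lemma measurableSet_B (M : ℕ) (β : ℝ) : MeasurableSet (B M β) :=
  MeasurableSet.univ_pi fun _ => measurableSet_Icc

lemma isCompact_B (M : ℕ) (β : ℝ) : IsCompact (B M β) :=
  isCompact_univ_pi fun _ => isCompact_Icc

lemma integrableOn_B {M : ℕ} {β : ℝ} {g : (Fin M → ℝ) → ℝ} (hg : Continuous g) :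
    IntegrableOn g (B M β) :=
  hg.continuousOn.integrableOn_compact (isCompact_B M β)

lemma oneD_exp_Icc (β : ℝ) (hβ : 0 ≤ β) :
    (∫ x in Set.Icc (0:ℝ) β, Real.exp (-x)) = 1 - Real.exp (-β) := by
  rw [integral_Icc_eq_integral_Ioc, ← intervalIntegral.integral_of_le hβ]
  have h := intervalIntegral.integral_comp_neg (a := (0:ℝ)) (b := β) (fun x => Real.exp x)
  rw [h, neg_zero, integral_exp, Real.exp_zero]

lemma cube_integral (M : ℕ) (β : ℝ) (hβ : 0 ≤ β) :
    (∫ t in B M β, Real.exp (-(∑ i, t i))) = (1 - Real.exp (-β)) ^ M := by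
  rw [← integral_indicator (measurableSet_B M β)]
  have h1 : (B M β).indicator (fun t : Fin M → ℝ => Real.exp (-(∑ i, t i)))
      = fun t => ∏ i, (Set.Icc (0:ℝ) β).indicator (fun x => Real.exp (-x)) (t i) := by
    funext t
    by_cases h : t ∈ B M β
    · rw [Set.indicator_of_mem h]
      have h2 : ∀ i, (Set.Icc (0:ℝ) β).indicator (fun x => Real.exp (-x)) (t i)
          = Real.exp (-(t i)) := fun i => Set.indicator_of_mem (h i (Set.mem_univ i)) _
      simp_rw [h2]
      rw [← Real.exp_sum]
      congr 1
      simp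
    · rw [Set.indicator_of_notMem h]
      have h3 : ∃ i, t i ∉ Set.Icc (0:ℝ) β := by
        by_contra hc
        push_neg at hc
        exact h (fun i _ => hc i)
      obtain ⟨i, hi⟩ := h3
      exact (Finset.prod_eq_zero (Finset.mem_univ i) (Set.indicator_of_notMem hi _)).symm
  rw [h1, volume_pi, integral_fintype_prod_eq_pow
    ((Set.Icc (0:ℝ) β).indicator fun x => Real.exp (-x)), Fintype.card_fin,
    integral_indicator measurableSet_Icc, oneD_exp_Icc β hβ]

lemma cube_vol (M : ℕ) (β : ℝ) (hβ : 0 ≤ β) : (∫ t in B M β, (1:ℝ)) = β ^ M := by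
  have h1 : volume (B M β) = ENNReal.ofReal β ^ M := by
    rw [B, volume_pi_pi]
    simp [Real.volume_Icc]
  rw [setIntegral_const, measureReal_def, h1, smul_eq_mul, mul_one, ENNReal.toReal_pow,
    ENNReal.toReal_ofReal hβ]

lemma main (M : ℕ) (τ β : ℝ) (hτ : 0 ≤ τ) (hβ : 0 ≤ β)
    (hvol : β ^ M = τ ^ M / (M.factorial : ℝ)) :
    (1 - Real.exp (-β)) ^ M ≤ Fc M τ ∧
      (0 < M → τ < M * β → (1 - Real.exp (-β)) ^ M < Fc M τ) := by
  classical
  set w : (Fin M → ℝ) → ℝ := fun t => Real.exp (-(∑ i, t i)) with hw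
  have hwc : Continuous w := by fun_prop
  set f : (Fin M → ℝ) → ℝ := fun t => (B M β).indicator w t
      + Real.exp (-τ) * (S M τ).indicator (fun _ => (1:ℝ)) t with hf
  set g : (Fin M → ℝ) → ℝ := fun t => (S M τ).indicator w t
      + Real.exp (-τ) * (B M β).indicator (fun _ => (1:ℝ)) t with hg
  have hfg : ∀ t, f t ≤ g t := by
    intro t
    simp only [hf, hg, Set.indicator_apply]
    split_ifs with hB hS hS
    · exact le_refl _
    · have h0 : ∀ i, 0 ≤ t i := fun i => (hB i (Set.mem_univ i)).1
      have hsum : τ < ∑ i, t i := by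
        by_contra hle
        exact hS ⟨h0, not_lt.1 hle⟩
      rw [mul_zero, add_zero, mul_one, zero_add, hw]
      exact (Real.exp_le_exp.2 (by linarith)).trans (le_refl _)
    · rw [mul_one, zero_add, mul_zero, add_zero, hw]
      exact Real.exp_le_exp.2 (by linarith [hS.2])
    · exact le_refl _
  have hIf : Integrable f :=
    ((integrable_indicator_iff (measurableSet_B M β)).2 (integrableOn_B hwc)).add
      (((integrable_indicator_iff (measurableSet_S M τ)).2
        (integrableOn_S continuous_const)).const_mul _)
  have hIg : Integrable g :=
    ((integrable_indicator_iff (measurableSet_S M τ)).2 (integrableOn_S hwc)).add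
      (((integrable_indicator_iff (measurableSet_B M β)).2
        (integrableOn_B continuous_const)).const_mul _)
  have hvf : ∫ t, f t = (1 - Real.exp (-β)) ^ M + Real.exp (-τ) * Vc M τ := by
    rw [hf, integral_add ((integrable_indicator_iff (measurableSet_B M β)).2
        (integrableOn_B hwc))
      (((integrable_indicator_iff (measurableSet_S M τ)).2
        (integrableOn_S continuous_const)).const_mul _),
      integral_const_mul, integral_indicator (measurableSet_B M β),
      integral_indicator (measurableSet_S M τ), cube_integral M β hβ, simplex_vol M τ]
  have hvg : ∫ t, g t = Fc M τ + Real.exp (-τ) * β ^ M := by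
    rw [hg, integral_add ((integrable_indicator_iff (measurableSet_S M τ)).2
        (integrableOn_S hwc))
      (((integrable_indicator_iff (measurableSet_B M β)).2
        (integrableOn_B continuous_const)).const_mul _),
      integral_const_mul, integral_indicator (measurableSet_S M τ),
      integral_indicator (measurableSet_B M β), cube_vol M β hβ, simplex_integral M τ]
  have hVc : Vc M τ = β ^ M := by rw [Vc, if_pos hτ, ← hvol]
  constructor
  · have h := integral_mono hIf hIg hfg
    rw [hvf, hvg, hVc] at h
    linarith
  · intro hM hlt
    haveI : Nonempty (Fin M) := Fin.pos_iff_nonempty.1 hM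
    have hMpos : (0:ℝ) < M := Nat.cast_pos.2 hM
    set γ : ℝ := (τ / M + β) / 2 with hγdef
    have hτM : τ / M < β := (div_lt_iff₀ hMpos).2 (by linarith)
    have hγβ : γ < β := by rw [hγdef]; linarith
    have hγ0 : 0 ≤ γ := by
      have := div_nonneg hτ hMpos.le
      rw [hγdef]; linarith
    have hγτ : τ < M * γ := by
      have h1 : τ / M < γ := by rw [hγdef]; linarith
      calc τ = M * (τ / M) := by field_simp
        _ < M * γ := by exact mul_lt_mul_of_pos_left h1 hMpos
    set U : Set (Fin M → ℝ) := Set.pi Set.univ (fun _ => Set.Ioo γ β) with hU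
    have hUsub : U ⊆ Function.support (fun t => g t - f t) := by
      intro t ht
      have htB : t ∈ B M β := fun i hi => ⟨hγ0.trans (ht i hi).1.le, (ht i hi).2.le⟩
      have htsum : τ < ∑ i, t i := by
        have h2 : ∀ i ∈ Finset.univ, γ < t i := fun i _ => (ht i (Set.mem_univ i)).1
        have h3 := Finset.sum_lt_sum_of_nonempty Finset.univ_nonempty h2
        rw [Finset.sum_const, Finset.card_univ, Fintype.card_fin, nsmul_eq_mul] at h3
        linarith
      have htS : t ∉ S M τ := fun hSm => absurd hSm.2 (not_le.2 htsum)
      have hwlt : w t < Real.exp (-τ) := by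
        rw [hw]
        exact Real.exp_lt_exp.2 (by linarith)
      simp only [Function.mem_support, hf, hg]
      rw [Set.indicator_of_mem htB, Set.indicator_of_notMem htS,
        Set.indicator_of_notMem htS, Set.indicator_of_mem htB]
      rw [mul_one, mul_zero, add_zero, zero_add]
      intro hcontra
      have : w t = Real.exp (-τ) := by linarith [sub_eq_zero.1 hcontra]
      linarith
    have hUvol : 0 < volume U := by
      rw [hU, volume_pi_pi]
      simp only [Real.volume_Ioo]
      rw [Finset.prod_const, Finset.card_univ, Fintype.card_fin]
      exact ENNReal.pow_pos (ENNReal.ofReal_pos.2 (by linarith)) M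
    have hpos : 0 < ∫ t, (g t - f t) := by
      rw [integral_pos_iff_support_of_nonneg_ae
        (Filter.Eventually.of_forall (fun t => sub_nonneg.2 (hfg t))) (hIg.sub hIf)]
      exact lt_of_lt_of_le hUvol (measure_mono hUsub)
    rw [integral_sub hIg hIf] at hpos
    have h := hpos
    rw [hvf, hvg, hVc] at h
    linarith

lemma factorial_lt_pow {M : ℕ} (hM : 2 ≤ M) : M.factorial < M ^ M := by
  obtain ⟨m, rfl⟩ : ∃ m, M = m + 2 := ⟨M - 2, by omega⟩
  calc (m+2).factorial = (m+2) * (m+1).factorial := rfl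
    _ ≤ (m+2) * (m+1)^(m+1) := Nat.mul_le_mul_left _ (Nat.factorial_le_pow _)
    _ < (m+2) * (m+2)^(m+1) := by
        have h1 : (m+1)^(m+1) < (m+2)^(m+1) :=
          Nat.pow_lt_pow_left (by omega) (by omega)
        exact mul_lt_mul_of_pos_left h1 (by omega)
    _ = (m+2)^(m+2) := (pow_succ' _ _).symm

end Alzer

open Alzer in
theorem alzer_gamma_cdf_lower_bound (M : ℕ) (hM : 1 ≤ M) (τ : ℝ) (hτ : 0 < τ)
    (α : ℝ) (hα : α = (M.factorial : ℝ) ^ (-(1 : ℝ) / (M : ℝ))) :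
    (1 - Real.exp (-(α * τ))) ^ M ≤
      1 - Real.exp (-τ) * ∑ k ∈ Finset.range M, τ ^ k / (k.factorial : ℝ) ∧
    (2 ≤ M →
      (1 - Real.exp (-(α * τ))) ^ M <
        1 - Real.exp (-τ) * ∑ k ∈ Finset.range M, τ ^ k / (k.factorial : ℝ)) := by
  have hMne : (M:ℝ) ≠ 0 := Nat.cast_ne_zero.2 (by omega)
  have hMpos : (0:ℝ) < M := Nat.cast_pos.2 (by omega)
  have hfac : (0:ℝ) < (M.factorial : ℝ) := Nat.cast_pos.2 M.factorial_pos
  have hα0 : 0 < α := by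
    rw [hα]
    exact Real.rpow_pos_of_pos hfac _
  set β := α * τ with hβdef
  have hβ : 0 ≤ β := (mul_pos hα0 hτ).le
  have hvol : β ^ M = τ ^ M / (M.factorial : ℝ) := by
    rw [hβdef, mul_pow, hα, ← Real.rpow_natCast ((M.factorial:ℝ) ^ (-(1:ℝ)/(M:ℝ))) M,
      ← Real.rpow_mul hfac.le]
    have h1 : (-(1:ℝ)/(M:ℝ)) * M = -1 := by field_simp
    rw [h1, Real.rpow_neg_one]
    ring
  have hmain := Alzer.main M τ β hτ.le hβ hvol
  have hFc : Alzer.Fc M τ = 1 - Real.exp (-τ) * ∑ k ∈ Finset.range M, τ ^ k / (k.factorial : ℝ) := by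
    rw [Alzer.Fc, if_pos hτ.le]
    rfl
  constructor
  · have h := hmain.1
    rw [hFc] at h
    exact h
  · intro h2M
    have hfaclt : (M.factorial : ℝ) < (M:ℝ) ^ M := by
      exact_mod_cast Alzer.factorial_lt_pow h2M
    have hα1M : 1 / (M:ℝ) < α := by
      have h3 : ((M:ℝ) ^ M : ℝ) ^ (-(1:ℝ)/(M:ℝ)) < α := by
        rw [hα]
        exact Real.rpow_lt_rpow_of_neg hfac hfaclt
          (div_neg_of_neg_of_pos (by norm_num) hMpos)
      have h4 : ((M:ℝ) ^ M : ℝ) ^ (-(1:ℝ)/(M:ℝ)) = 1 / (M:ℝ) := by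
        rw [← Real.rpow_natCast (M:ℝ) M, ← Real.rpow_mul hMpos.le]
        have h5 : (M:ℝ) * (-(1:ℝ)/(M:ℝ)) = -1 := by field_simp
        rw [h5, Real.rpow_neg_one, one_div]
      rwa [h4] at h3
    have hlt : τ < M * β := by
      rw [hβdef]
      have h6 : (1/(M:ℝ)) * τ < α * τ := mul_lt_mul_of_pos_right hα1M hτ
      have h7 : (M:ℝ) * ((1/(M:ℝ)) * τ) = τ := by field_simp
      nlinarith
    have h := hmain.2 (by omega) hlt
    rw [hFc] at h
    exact h
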